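/- Let S = {−4, −2, 0, 2, 4} ⊆ ℝ and let p : ℝ → ℝ be any function such that for every x ∈ ℝ, p(x) ∈ S and |x − p(x)| ≤ |x − s| for every s ∈ S. Then ∫_ℝ (1/2)·e^{−|x|}·(p(x))² dx > ∫_ℝ (1/2)·e^{−|x|}·x² dx; indeed the right-hand side equals 2 and the left-hand side equals 4e^{−1} + 12e^{−3} > 2. -/

import Mathlib

open MeasureTheory Real

namespace ProjNonconvexAux

open Set

lemma absle_sq {a b : ℝ} (h : |a| ≤ |b|) : a ^ 2 ≤ b ^ 2 := by
  nlinarith [abs_nonneg a, sq_abs a, sq_abs b]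

noncomputable def g (x : ℝ) : ℝ := if |x| ≤ 1 then 0 else if |x| ≤ 3 then 4 else 16

set_option maxHeartbeats 1000000 in
lemma key (p : ℝ → ℝ)
    (hp : ∀ x : ℝ, p x ∈ ({-4, -2, 0, 2, 4} : Set ℝ))
    (hmin : ∀ x : ℝ, ∀ s ∈ ({-4, -2, 0, 2, 4} : Set ℝ), |x - p x| ≤ |x - s|)
    (x : ℝ) (h1 : |x| ≠ 1) (h3 : |x| ≠ 3) : (p x) ^ 2 = g x := by
  have hS : ∀ s ∈ ({-4, -2, 0, 2, 4} : Set ℝ), (x - p x) ^ 2 ≤ (x - s) ^ 2 := by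
    intro s hs; exact absle_sq (hmin x s hs)
  have h0 := hS 0 (by norm_num)
  have h2 := hS 2 (by norm_num)
  have hm2 := hS (-2) (by norm_num)
  have h4 := hS 4 (by norm_num)
  have hm4 := hS (-4) (by norm_num)
  have hp' := hp x
  simp only [Set.mem_insert_iff, Set.mem_singleton_iff] at hp'
  unfold g
  rcases abs_cases x with ⟨hax, hx0⟩ | ⟨hax, hx0⟩ <;> rw [hax] at h1 h3 ⊢ <;>
    rcases hp' with h|h|h|h|h <;> rw [h] at h0 h2 hm2 h4 hm4 ⊢ <;>
    split_ifs with i1 i2 <;> (try push_neg at *) <;> norm_num <;>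
    rcases lt_or_gt_of_ne h1 with c|c <;> rcases lt_or_gt_of_ne h3 with d|d <;> nlinarith

lemma int1 : (∫ x : ℝ, (1 / 2) * Real.exp (-|x|) * x ^ 2) = 2 := by
  have hsq : (fun x : ℝ => (1 / 2) * Real.exp (-|x|) * x ^ 2)
      = fun x : ℝ => (1 / 2) * Real.exp (-|x|) * |x| ^ 2 := by
    funext x; rw [sq_abs]
  rw [hsq, integral_comp_abs (f := fun t : ℝ => (1 / 2) * Real.exp (-t) * t ^ 2)]
  have hG : Real.Gamma 3 = ∫ x in Ioi (0:ℝ), Real.exp (-x) * x ^ 2 := by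
    rw [Real.Gamma_eq_integral (by norm_num : (0:ℝ) < 3)]
    refine setIntegral_congr_fun measurableSet_Ioi fun x hx => ?_
    rw [show (3:ℝ) - 1 = ((2:ℕ):ℝ) by norm_num, Real.rpow_natCast]
  have hG2 : Real.Gamma 3 = 2 := by
    rw [show (3:ℝ) = (2:ℕ) + 1 by norm_num, Real.Gamma_nat_eq_factorial]; norm_num
  have : (∫ x in Ioi (0:ℝ), (1 / 2) * Real.exp (-x) * x ^ 2)
      = (1 / 2) * ∫ x in Ioi (0:ℝ), Real.exp (-x) * x ^ 2 := by
    simp_rw [mul_assoc]; exact integral_const_mul _ _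
  rw [this, ← hG, hG2]; norm_num

lemma int2 : (∫ x : ℝ, (1 / 2) * Real.exp (-|x|) * g x)
    = 4 * Real.exp (-1) + 12 * Real.exp (-3) := by
  have habs : (fun x : ℝ => (1 / 2) * Real.exp (-|x|) * g x)
      = fun x : ℝ => (1 / 2) * Real.exp (-|x|) * g |x| := by
    funext x; unfold g; rw [abs_abs]
  rw [habs, integral_comp_abs (f := fun t : ℝ => (1 / 2) * Real.exp (-t) * g t)]
  have hrw : ∫ x in Ioi (0:ℝ), (1 / 2) * Real.exp (-x) * g x
      = ∫ x in Ioi (0:ℝ),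
        ((Ioc (1:ℝ) 3).indicator (fun t => 2 * Real.exp (-t)) x
          + (Ioi (3:ℝ)).indicator (fun t => 8 * Real.exp (-t)) x) := by
    refine setIntegral_congr_fun measurableSet_Ioi fun x hx => ?_
    simp only [mem_Ioi] at hx
    unfold g
    rw [abs_of_pos hx]
    rcases le_or_gt x 1 with h1 | h1
    · rw [if_pos h1, indicator_of_notMem (by simp [h1]), indicator_of_notMem (by simp; linarith)]
      ring
    · rcases le_or_gt x 3 with h3 | h3
      · rw [if_neg (by linarith), if_pos h3, indicator_of_mem (by constructor <;> linarith),
          indicator_of_notMem (by simp [h3])]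
        ring
      · rw [if_neg (by linarith), if_neg (by linarith),
          indicator_of_notMem (by simp only [mem_Ioc, not_and, not_le]; intro _; linarith),
          indicator_of_mem (by exact h3)]
        ring
  have hint1 : Integrable ((Ioc (1:ℝ) 3).indicator (fun t => 2 * Real.exp (-t))) := by
    rw [integrable_indicator_iff measurableSet_Ioc]
    exact (Continuous.integrableOn_Ioc (by continuity))
  have hint2 : Integrable ((Ioi (3:ℝ)).indicator (fun t => 8 * Real.exp (-t))) := by
    rw [integrable_indicator_iff measurableSet_Ioi]
    have := (exp_neg_integrableOn_Ioi 3 (one_pos)).const_mul (8:ℝ)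
    simpa [IntegrableOn] using this
  rw [hrw, integral_add hint1.integrableOn hint2.integrableOn,
    setIntegral_indicator measurableSet_Ioc, setIntegral_indicator measurableSet_Ioi,
    show Ioi (0:ℝ) ∩ Ioc 1 3 = Ioc 1 3 by
      rw [inter_eq_self_of_subset_right]; intro x hx; exact lt_trans one_pos hx.1,
    show Ioi (0:ℝ) ∩ Ioi 3 = Ioi 3 by
      rw [inter_eq_self_of_subset_right]; intro x hx; exact lt_trans (by norm_num : (0:ℝ) < 3) hx]
  have e1 : ∫ x in Ioc (1:ℝ) 3, 2 * Real.exp (-x)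
      = 2 * (Real.exp (-1) - Real.exp (-3)) := by
    rw [← intervalIntegral.integral_of_le (by norm_num : (1:ℝ) ≤ 3)]
    rw [intervalIntegral.integral_const_mul]
    rw [intervalIntegral.integral_comp_neg (fun t => Real.exp t)]
    rw [integral_exp]
  have e2 : ∫ x in Ioi (3:ℝ), 8 * Real.exp (-x) = 8 * Real.exp (-3) := by
    rw [integral_const_mul, integral_exp_neg_Ioi]
  rw [e1, e2]; ring

lemma gt2 : 4 * Real.exp (-1) + 12 * Real.exp (-3) > 2 := by
  have h1 : Real.exp 1 < 2.7182818286 := Real.exp_one_lt_d9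
  have h2 : (0:ℝ) < Real.exp (-1) := Real.exp_pos _
  have h3 : Real.exp (-1) * Real.exp 1 = 1 := by rw [← Real.exp_add]; norm_num
  have hb : (0.3677:ℝ) < Real.exp (-1) := by nlinarith
  have hc : Real.exp (-3) = Real.exp (-1) ^ 3 := by
    rw [← Real.exp_nat_mul]; norm_num
  nlinarith [pow_lt_pow_left₀ hb (by norm_num : (0:ℝ) ≤ 0.3677) (by norm_num : 3 ≠ 0)]

lemma intp (p : ℝ → ℝ)
    (hp : ∀ x : ℝ, p x ∈ ({-4, -2, 0, 2, 4} : Set ℝ))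
    (hmin : ∀ x : ℝ, ∀ s ∈ ({-4, -2, 0, 2, 4} : Set ℝ), |x - p x| ≤ |x - s|) :
    (∫ x : ℝ, (1 / 2) * Real.exp (-|x|) * (p x) ^ 2)
      = 4 * Real.exp (-1) + 12 * Real.exp (-3) := by
  have hT : (volume : Measure ℝ) ({-3, -1, 1, 3} : Set ℝ) = 0 :=
    (Set.toFinite _).measure_zero _
  have hae : (fun x : ℝ => (1 / 2) * Real.exp (-|x|) * (p x) ^ 2)
      =ᵐ[volume] fun x : ℝ => (1 / 2) * Real.exp (-|x|) * g x := by
    rw [Filter.EventuallyEq, ae_iff]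
    refine measure_mono_null (fun x hx => ?_) hT
    simp only [Set.mem_setOf_eq] at hx
    by_contra hmem
    apply hx
    simp only [Set.mem_insert_iff, Set.mem_singleton_iff] at hmem
    push_neg at hmem
    obtain ⟨a1, a2, a3, a4⟩ := hmem
    have e1 : |x| ≠ 1 := by
      intro h; rcases abs_eq (by norm_num : (0:ℝ) ≤ 1) |>.mp h with h' | h' <;> simp_all
    have e3 : |x| ≠ 3 := by
      intro h; rcases abs_eq (by norm_num : (0:ℝ) ≤ 3) |>.mp h with h' | h' <;> simp_all
    rw [key p hp hmin x e1 e3]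
  rw [integral_congr_ae hae, int2]

end ProjNonconvexAux

/-- **Proposition 1** (instantiated by its proof): if `p` is a nearest-point projection of the
real line onto the finite set `S = {-4, -2, 0, 2, 4}`, then projecting a standard Laplace random
variable (density `(1/2)e^{-|x|}`, true value `0`) onto `S` strictly increases the expected
squared error: the unprojected error is `2` while the projected error is
`4e⁻¹ + 12e⁻³ > 2`. -/
theorem projection_onto_nonconvex_set_increases_expected_error
    (p : ℝ → ℝ)
    (hp : ∀ x : ℝ, p x ∈ ({-4, -2, 0, 2, 4} : Set ℝ))
    (hmin : ∀ x : ℝ, ∀ s ∈ ({-4, -2, 0, 2, 4} : Set ℝ), |x - p x| ≤ |x - s|) :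
    (∫ x : ℝ, (1 / 2) * Real.exp (-|x|) * x ^ 2) = 2 ∧
    (∫ x : ℝ, (1 / 2) * Real.exp (-|x|) * (p x) ^ 2)
      = 4 * Real.exp (-1) + 12 * Real.exp (-3) ∧
    (∫ x : ℝ, (1 / 2) * Real.exp (-|x|) * (p x) ^ 2)
      > ∫ x : ℝ, (1 / 2) * Real.exp (-|x|) * x ^ 2 := by
  refine ⟨ProjNonconvexAux.int1, ProjNonconvexAux.intp p hp hmin, ?_⟩
  rw [ProjNonconvexAux.int1, ProjNonconvexAux.intp p hp hmin]
  exact ProjNonconvexAux.gt2
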